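/- Dual of the min-max problem: the optimal value of min_{x^1 ∈ X_1, …, x^N ∈ X_N} max_{s ∈ {1,…,S}} ∑_{i=1}^N g_{is}(x^i_s) equals the optimal value of max { ∑_{i=1}^N q_i(μ) : μ ⪰ 0, 1ᵀ μ = 1 }, where q_i(μ) = min_{x ∈ X_i} ∑_s μ_s g_{is}(x_s). -/

import Mathlib

open Set Finset

/-- Infimum of a continuous function over a nonempty compact set is attained. -/
lemma inf_attained {S : ℕ} (K : Set (Fin S → ℝ)) (hK : IsCompact K) (hKne : K.Nonempty)
    (h : (Fin S → ℝ) → ℝ) (hc : Continuous h) :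
    ∃ x0 ∈ K, sInf {w : ℝ | ∃ x ∈ K, w = h x} = h x0 ∧ ∀ x ∈ K, h x0 ≤ h x := by
  obtain ⟨x0, hx0K, hmin⟩ := hK.exists_isMinOn hKne hc.continuousOn
  refine ⟨x0, hx0K, ?_, fun x hx => hmin hx⟩
  have hleast : IsLeast {w : ℝ | ∃ x ∈ K, w = h x} (h x0) := by
    constructor
    · exact ⟨x0, hx0K, rfl⟩
    · rintro w ⟨x, hx, rfl⟩; exact hmin hx
  exact hleast.csInf_eq

set_option maxHeartbeats 1000000 in
/-- Strong duality for the min-max problem: the optimal primal (min-max)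
value equals the optimal value of the dual over the probability simplex. -/
theorem minmax_strong_duality (N S : ℕ) (hN : 1 ≤ N) (hS : 1 ≤ S)
    (X : Fin N → Set (Fin S → ℝ))
    (hne : ∀ i, (X i).Nonempty) (hcvx : ∀ i, Convex ℝ (X i))
    (hcmp : ∀ i, IsCompact (X i))
    (g : Fin N → Fin S → ℝ → ℝ)
    (hg : ∀ i s, ConvexOn ℝ Set.univ (g i s)) :
    sInf {v : ℝ | ∃ x : Fin N → (Fin S → ℝ), (∀ i, x i ∈ X i) ∧
        v = ⨆ s, ∑ i, g i s (x i s)}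
      = sSup {v : ℝ | ∃ μ : Fin S → ℝ, (∀ s, 0 ≤ μ s) ∧ (∑ s, μ s = 1) ∧
          v = ∑ i, sInf {w : ℝ | ∃ x ∈ X i, w = ∑ s, μ s * g i s (x s)}} := by
  have hSne : Nonempty (Fin S) := Fin.pos_iff_nonempty.mp hS
  set A := {v : ℝ | ∃ x : Fin N → (Fin S → ℝ), (∀ i, x i ∈ X i) ∧
      v = ⨆ s, ∑ i, g i s (x i s)} with hA
  set B := {v : ℝ | ∃ μ : Fin S → ℝ, (∀ s, 0 ≤ μ s) ∧ (∑ s, μ s = 1) ∧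
      v = ∑ i, sInf {w : ℝ | ∃ x ∈ X i, w = ∑ s, μ s * g i s (x s)}} with hB
  -- continuity of the g's
  have hgc : ∀ i s, Continuous (g i s) := fun i s => (hg i s).locallyLipschitz.continuous
  have hhc : ∀ (i : Fin N) (μ : Fin S → ℝ),
      Continuous (fun x : Fin S → ℝ => ∑ s, μ s * g i s (x s)) := by
    intro i μ
    exact continuous_finset_sum _ fun s _ =>
      (continuous_const.mul ((hgc i s).comp (continuous_apply s)))
  -- attainment of the inner infima
  have key : ∀ (i : Fin N) (μ : Fin S → ℝ), ∃ x0 ∈ X i,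
      sInf {w : ℝ | ∃ x ∈ X i, w = ∑ s, μ s * g i s (x s)} = ∑ s, μ s * g i s (x0 s) ∧
      ∀ x ∈ X i, ∑ s, μ s * g i s (x0 s) ≤ ∑ s, μ s * g i s (x s) := by
    intro i μ
    exact inf_attained (X i) (hcmp i) (hne i) _ (hhc i μ)
  -- nonemptiness of A
  choose x₀ hx₀ using hne
  have hAne : A.Nonempty := ⟨_, x₀, hx₀, rfl⟩
  -- nonemptiness of B
  have hBne : B.Nonempty := by
    refine ⟨_, fun _ => (S : ℝ)⁻¹, fun s => by positivity, ?_, rfl⟩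
    have : (S : ℝ) ≠ 0 := Nat.cast_ne_zero.mpr (by omega)
    simp [Finset.sum_const, this]
  -- weak duality
  have hweak : ∀ a ∈ A, ∀ b ∈ B, b ≤ a := by
    rintro a ⟨x, hx, rfl⟩ b ⟨μ, hμ0, hμ1, rfl⟩
    have hstep : ∀ i : Fin N,
        sInf {w : ℝ | ∃ x' ∈ X i, w = ∑ s, μ s * g i s (x' s)} ≤
          ∑ s, μ s * g i s (x i s) := by
      intro i
      obtain ⟨x0, hx0, heq, hmin⟩ := key i μ
      rw [heq]; exact hmin _ (hx i)
    calc ∑ i, sInf {w : ℝ | ∃ x' ∈ X i, w = ∑ s, μ s * g i s (x' s)}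
        ≤ ∑ i, ∑ s, μ s * g i s (x i s) := Finset.sum_le_sum fun i _ => hstep i
      _ = ∑ s, μ s * ∑ i, g i s (x i s) := by
          rw [Finset.sum_comm]; simp [Finset.mul_sum]
      _ ≤ ∑ s, μ s * (⨆ t, ∑ i, g i t (x i t)) := by
          refine Finset.sum_le_sum fun s _ => mul_le_mul_of_nonneg_left ?_ (hμ0 s)
          exact le_ciSup (f := fun t => ∑ i, g i t (x i t)) (Set.Finite.bddAbove (Set.finite_range _)) s
      _ = ⨆ s, ∑ i, g i s (x i s) := by rw [← Finset.sum_mul, hμ1, one_mul]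
  obtain ⟨a₀, ha₀⟩ := id hAne
  obtain ⟨b₀, hb₀⟩ := id hBne
  have hAbdd : BddBelow A := ⟨b₀, fun a ha => hweak a ha b₀ hb₀⟩
  have hBbdd : BddAbove B := ⟨a₀, fun b hb => hweak a₀ ha₀ b hb⟩
  -- it remains to show sInf A ≤ sSup B
  refine le_antisymm ?_ (csSup_le hBne fun b hb => le_csInf hAne fun a ha => hweak a ha b hb)
  set P := sInf A with hP
  -- the convex sets to separate
  set C := {y : Fin S → ℝ | ∃ x : Fin N → (Fin S → ℝ), (∀ i, x i ∈ X i) ∧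
      ∀ s, ∑ i, g i s (x i s) ≤ y s} with hC
  set O := {y : Fin S → ℝ | ∀ s, y s < P} with hO
  have hOopen : IsOpen O := by
    have : O = ⋂ s, {y : Fin S → ℝ | y s < P} := by ext y; simp [hO]
    rw [this]
    exact isOpen_iInter_of_finite fun s =>
      isOpen_lt (continuous_apply s) continuous_const
  have hOcvx : Convex ℝ O := by
    have : O = ⋂ s, {y : Fin S → ℝ | y s < P} := by ext y; simp [hO]
    rw [this]
    exact convex_iInter fun s => convex_halfSpace_lt
      ⟨fun a b => rfl, fun c a => rfl⟩ P
  have hOne : O.Nonempty := ⟨fun _ => P - 1, fun s => by norm_num⟩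
  have hCcvx : Convex ℝ C := by
    rintro y ⟨x, hx, hy⟩ z ⟨x', hx', hz⟩ a b ha hb hab
    refine ⟨fun i => a • x i + b • x' i, fun i => hcvx i (hx i) (hx' i) ha hb hab, ?_⟩
    intro s
    have h1 : ∀ i : Fin N, g i s (a * x i s + b * x' i s) ≤
        a * g i s (x i s) + b * g i s (x' i s) := by
      intro i
      have := (hg i s).2 (Set.mem_univ (x i s)) (Set.mem_univ (x' i s)) ha hb hab
      simpa [smul_eq_mul] using this
    calc ∑ i, g i s ((a • x i + b • x' i) s)
        = ∑ i, g i s (a * x i s + b * x' i s) := by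
          simp [Pi.add_apply, Pi.smul_apply, smul_eq_mul]
      _ ≤ ∑ i, (a * g i s (x i s) + b * g i s (x' i s)) :=
          Finset.sum_le_sum fun i _ => h1 i
      _ = a * ∑ i, g i s (x i s) + b * ∑ i, g i s (x' i s) := by
          rw [Finset.sum_add_distrib, Finset.mul_sum, Finset.mul_sum]
      _ ≤ a * y s + b * z s := by
          gcongr
          · exact hy s
          · exact hz s
      _ = (a • y + b • z) s := by simp [smul_eq_mul]
  have hCne : C.Nonempty := ⟨fun s => ∑ i, g i s (x₀ i s), x₀, hx₀, fun s => le_rfl⟩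
  have hdisj : Disjoint O C := by
    rw [Set.disjoint_left]
    rintro y hyO ⟨x, hx, hy⟩
    obtain ⟨t, ht⟩ := Finite.exists_max (fun s => ∑ i, g i s (x i s))
    have haA : (⨆ s, ∑ i, g i s (x i s)) ∈ A := ⟨x, hx, rfl⟩
    have h1 : (⨆ s, ∑ i, g i s (x i s)) ≤ ∑ i, g i t (x i t) := ciSup_le ht
    have h2 : ∑ i, g i t (x i t) < P := lt_of_le_of_lt (hy t) (hyO t)
    have h3 : P ≤ ⨆ s, ∑ i, g i s (x i s) := csInf_le hAbdd haA
    linarith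
  obtain ⟨f, u, hfO, hfC⟩ := geometric_hahn_banach_open hOcvx hOopen hCcvx hdisj
  set μ : Fin S → ℝ := fun s => f (Pi.single s (1:ℝ) : Fin S → ℝ) with hμdef
  have hf : ∀ y : Fin S → ℝ, f y = ∑ s, y s * μ s := by
    intro y
    have hy : y = ∑ s, y s • (Pi.single s (1:ℝ) : Fin S → ℝ) := by
      ext t
      simp [Finset.sum_apply, Pi.single_apply, Finset.sum_ite_eq]
    conv_lhs => rw [hy]
    rw [map_sum]
    simp [smul_eq_mul, hμdef]
  obtain ⟨c₀, hc₀⟩ := hCne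
  -- μ is nonnegative
  have hμ0 : ∀ s, 0 ≤ μ s := by
    intro s
    by_contra hneg
    push_neg at hneg
    have hup : ∀ t : ℝ, 0 ≤ t → u ≤ f c₀ + t * μ s := by
      intro t ht
      obtain ⟨x, hx, hcy⟩ := hc₀
      have hmem : (c₀ + t • (Pi.single s (1:ℝ) : Fin S → ℝ)) ∈ C := by
        refine ⟨x, hx, fun s' => ?_⟩
        have : (0:ℝ) ≤ (t • (Pi.single s (1:ℝ) : Fin S → ℝ)) s' := by
          rcases eq_or_ne s' s with rfl | hss
          · simp [ht]
          · simp [Pi.single_apply, hss]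
        have := hcy s'
        simp only [Pi.add_apply]
        linarith
      have := hfC _ hmem
      rw [map_add, map_smul] at this
      simpa [smul_eq_mul, hμdef] using this
    have h0 := hup 0 le_rfl
    simp at h0
    set t := (u - f c₀ - 1) / μ s with htdef
    have ht0 : 0 ≤ t := div_nonneg_iff.mpr (Or.inr ⟨by linarith, hneg.le⟩)
    have := hup t ht0
    rw [htdef, div_mul_cancel₀ _ (ne_of_lt hneg)] at this
    linarith
  -- (P - ε) * T < u for every ε > 0, hence P * T ≤ u
  have hPT : ∀ ε : ℝ, 0 < ε → (P - ε) * (∑ s, μ s) < u := by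
    intro ε hε
    have hyO : (fun _ : Fin S => P - ε) ∈ O := fun s => by simp [hε]
    have := hfO _ hyO
    rw [hf] at this
    simpa [← Finset.mul_sum] using this
  set T := ∑ s, μ s with hT
  have hT0 : 0 ≤ T := Finset.sum_nonneg fun s _ => hμ0 s
  have hTpos : 0 < T := by
    rcases hT0.lt_or_eq with h | h
    · exact h
    have hall : ∀ s, μ s = 0 := by
      intro s
      have := (Finset.sum_eq_zero_iff_of_nonneg (fun s _ => hμ0 s)).mp h.symm
      exact this s (Finset.mem_univ s)
    have h1 : f c₀ = 0 := by rw [hf]; simp [hall]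
    obtain ⟨y, hy⟩ := hOne
    have h2 : f y = 0 := by rw [hf]; simp [hall]
    have h3 := hfO y hy
    have h4 := hfC c₀ hc₀
    rw [h1] at h4; rw [h2] at h3
    linarith
  have hPTu : P * T ≤ u := by
    by_contra hlt
    push_neg at hlt
    have hε : 0 < (P * T - u) / (2 * T) := div_pos (by linarith) (by linarith)
    have := hPT _ hε
    have hexp : (P - (P * T - u) / (2 * T)) * T = P * T - (P * T - u) / 2 := by
      field_simp
    rw [hexp] at this
    linarith
  -- the normalized multiplier
  set lam : Fin S → ℝ := fun s => μ s / T with hlam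
  have hlam0 : ∀ s, 0 ≤ lam s := fun s => div_nonneg (hμ0 s) hT0
  have hlam1 : ∑ s, lam s = 1 := by
    rw [hlam]; rw [← Finset.sum_div, ← hT, div_self (ne_of_gt hTpos)]
  -- build the optimal dual point
  choose xm hxm hqm hqmin using fun i => key i lam
  set b : ℝ := ∑ i, sInf {w : ℝ | ∃ x ∈ X i, w = ∑ s, lam s * g i s (x s)} with hbdef
  have hbB : b ∈ B := ⟨lam, hlam0, hlam1, rfl⟩
  -- the point y* built from the minimizers lies in C
  have hyC : (fun s => ∑ i, g i s (xm i s)) ∈ C := ⟨xm, hxm, fun s => le_rfl⟩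
  have hfy := hfC _ hyC
  rw [hf] at hfy
  -- compute b
  have hbval : b = ∑ s, lam s * ∑ i, g i s (xm i s) := by
    rw [hbdef]
    rw [Finset.sum_congr rfl fun i _ => hqm i]
    rw [Finset.sum_comm]
    simp [Finset.mul_sum]
  have hPb : P ≤ b := by
    have h1 : ∑ s, lam s * ∑ i, g i s (xm i s)
        = (∑ s, (∑ i, g i s (xm i s)) * μ s) / T := by
      rw [Finset.sum_div]
      exact Finset.sum_congr rfl fun s _ => by rw [hlam]; ring
    have h2 : P ≤ (∑ s, (∑ i, g i s (xm i s)) * μ s) / T := by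
      rw [le_div_iff₀ hTpos]
      calc P * T ≤ u := hPTu
        _ ≤ ∑ s, (∑ i, g i s (xm i s)) * μ s := hfy
    rw [hbval, h1]; exact h2
  exact le_trans hPb (le_csSup hBbdd hbB)
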